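/- Let K ⊆ ℝ^n be a nonempty closed convex set, d : ℝ^n → ℝ a differentiable m-strongly convex function (m > 0), and b > a > 0 constants. Then for every η ∈ ℝ^n: (i) φ^{ab}(λ, η) ≥ 0 for all λ ∈ ℝ^n; and (ii) φ^{ab}(λ, η) = 0 if and only if λ ∈ SOL(K, η), i.e. λ ∈ K and ⟨ω − λ, η⟩ ≥ 0 for all ω ∈ K. -/

import Mathlib

open scoped RealInnerProductSpace

/-- Auchmuty's function `L^c(λ, η, ω) = c·d(λ) − c·d(ω) + ⟨η − c·∇d(λ), λ − ω⟩`. -/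
noncomputable def Auchmuty {n : ℕ} (c : ℝ) (d : EuclideanSpace ℝ (Fin n) → ℝ)
    (lam eta om : EuclideanSpace ℝ (Fin n)) : ℝ :=
  c * d lam - c * d om + ⟪eta - c • gradient d lam, lam - om⟫

/-- The generalized primal gap function `φ^c(λ, η) = sup_{ω ∈ K} L^c(λ, η, ω)`. -/
noncomputable def primalGap {n : ℕ} (K : Set (EuclideanSpace ℝ (Fin n))) (c : ℝ)
    (d : EuclideanSpace ℝ (Fin n) → ℝ) (lam eta : EuclideanSpace ℝ (Fin n)) : ℝ :=
  sSup (Auchmuty c d lam eta '' K)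

/-- The generalized D-gap function `φ^{ab}(λ, η) = φ^a(λ, η) − φ^b(λ, η)`. -/
noncomputable def Dgap {n : ℕ} (K : Set (EuclideanSpace ℝ (Fin n))) (a b : ℝ)
    (d : EuclideanSpace ℝ (Fin n) → ℝ) (lam eta : EuclideanSpace ℝ (Fin n)) : ℝ :=
  primalGap K a d lam eta - primalGap K b d lam eta

private lemma auch_repr {n : ℕ} (c : ℝ) (d : EuclideanSpace ℝ (Fin n) → ℝ)
    (lam eta om : EuclideanSpace ℝ (Fin n)) :
    Auchmuty c d lam eta om
      = ⟪eta, lam - om⟫ + c * (d lam - d om + ⟪gradient d lam, om - lam⟫) := by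
  simp only [Auchmuty, inner_sub_left, inner_sub_right, real_inner_smul_left]
  ring

private lemma auch_self {n : ℕ} (c : ℝ) (d : EuclideanSpace ℝ (Fin n) → ℝ)
    (lam eta : EuclideanSpace ℝ (Fin n)) : Auchmuty c d lam eta lam = 0 := by
  simp [Auchmuty]

set_option maxHeartbeats 2000000 in
/-- nonnegativity of the generalized D-gap function on all of `ℝ^n`, and
`φ^{ab}(λ, η) = 0` iff `λ ∈ SOL(K, η)`. -/
theorem stmt3 {n : ℕ} (hn : 0 < n) (K : Set (EuclideanSpace ℝ (Fin n)))
    (hK : K.Nonempty) (hKclosed : IsClosed K) (hKconvex : Convex ℝ K)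
    (d : EuclideanSpace ℝ (Fin n) → ℝ) (m : ℝ) (hm : 0 < m)
    (hddiff : Differentiable ℝ d)
    (hstrong : ∀ x y : EuclideanSpace ℝ (Fin n),
      d x + ⟪gradient d x, y - x⟫ + m / 2 * ‖y - x‖ ^ 2 ≤ d y)
    (a b : ℝ) (ha : 0 < a) (hab : a < b) (eta : EuclideanSpace ℝ (Fin n)) :
    (∀ lam : EuclideanSpace ℝ (Fin n), 0 ≤ Dgap K a b d lam eta) ∧
    (∀ lam : EuclideanSpace ℝ (Fin n),
      (Dgap K a b d lam eta = 0 ↔ lam ∈ K ∧ ∀ om ∈ K, 0 ≤ ⟪om - lam, eta⟫)) := by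
  have hba : (0:ℝ) < b - a := sub_pos.2 hab
  have hb : (0:ℝ) < b := ha.trans hab
  -- strong-convexity bound on the "g" part
  have hg : ∀ lam om : EuclideanSpace ℝ (Fin n),
      d lam - d om + ⟪gradient d lam, om - lam⟫ ≤ -(m / 2 * ‖om - lam‖ ^ 2) := by
    intro lam om
    have := hstrong lam om
    linarith
  -- boundedness above of the Auchmuty images
  have hbdd : ∀ c : ℝ, 0 < c → ∀ lam, BddAbove (Auchmuty c d lam eta '' K) := by
    intro c hc lam
    refine ⟨‖eta‖ ^ 2 / (2 * c * m), ?_⟩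
    rintro y ⟨om, hom, rfl⟩
    rw [auch_repr]
    have h1 : ⟪eta, lam - om⟫ ≤ ‖eta‖ * ‖om - lam‖ := by
      calc ⟪eta, lam - om⟫ ≤ ‖eta‖ * ‖lam - om‖ := real_inner_le_norm _ _
        _ = ‖eta‖ * ‖om - lam‖ := by rw [norm_sub_rev]
    have h2 := hg lam om
    have h3 : c * (d lam - d om + ⟪gradient d lam, om - lam⟫)
        ≤ c * (-(m / 2 * ‖om - lam‖ ^ 2)) := mul_le_mul_of_nonneg_left h2 hc.le
    rw [le_div_iff₀ (by positivity : (0:ℝ) < 2 * c * m)]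
    nlinarith [sq_nonneg (c * m * ‖om - lam‖ - ‖eta‖), mul_pos hc hm,
      norm_nonneg (om - lam)]
  -- key pointwise inequality
  have hkey : ∀ lam om : EuclideanSpace ℝ (Fin n),
      Auchmuty b d lam eta om + (b - a) * (m / 2 * ‖om - lam‖ ^ 2)
        ≤ Auchmuty a d lam eta om := by
    intro lam om
    rw [auch_repr, auch_repr]
    nlinarith [hg lam om, hba]
  -- nonnegativity
  have hnonneg : ∀ lam, primalGap K b d lam eta ≤ primalGap K a d lam eta := by
    intro lam
    apply csSup_le (hK.image _)
    rintro y ⟨om, hom, rfl⟩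
    have h1 : Auchmuty a d lam eta om ≤ primalGap K a d lam eta :=
      le_csSup (hbdd a ha lam) ⟨om, hom, rfl⟩
    have h2 := hkey lam om
    have h3 : 0 ≤ (b - a) * (m / 2 * ‖om - lam‖ ^ 2) := by positivity
    linarith
  -- at a solution, each primal gap vanishes
  have hsol : ∀ c : ℝ, 0 < c → ∀ lam, lam ∈ K → (∀ om ∈ K, 0 ≤ ⟪om - lam, eta⟫) →
      primalGap K c d lam eta = 0 := by
    intro c hc lam hlam hvi
    apply le_antisymm
    · apply csSup_le (hK.image _)
      rintro y ⟨om, hom, rfl⟩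
      rw [auch_repr]
      have h1 : ⟪eta, lam - om⟫ ≤ 0 := by
        have h := hvi om hom
        have he : ⟪eta, lam - om⟫ = -⟪om - lam, eta⟫ := by
          rw [real_inner_comm, ← neg_sub om lam, inner_neg_left]
        linarith [he ▸ neg_nonpos_of_nonneg h]
      have h2 := hg lam om
      have h3 : (0:ℝ) ≤ m / 2 * ‖om - lam‖ ^ 2 := by positivity
      nlinarith
    · have h := le_csSup (hbdd c hc lam) (⟨lam, hlam, rfl⟩ :
        Auchmuty c d lam eta lam ∈ Auchmuty c d lam eta '' K)
      rwa [auch_self] at h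
  -- forward direction
  have hforward : ∀ lam, Dgap K a b d lam eta = 0 →
      lam ∈ K ∧ ∀ om ∈ K, 0 ≤ ⟪om - lam, eta⟫ := by
    intro lam hz
    have hzz : primalGap K a d lam eta = primalGap K b d lam eta := by
      unfold Dgap at hz; linarith
    -- near-maximizers of f_b are close to lam
    have happrox : ∀ δ : ℝ, 0 < δ → ∃ om ∈ K,
        primalGap K b d lam eta - δ < Auchmuty b d lam eta om ∧
        (b - a) * (m / 2 * ‖om - lam‖ ^ 2) < δ := by
      intro δ hδ
      obtain ⟨y, hy, hy2⟩ := exists_lt_of_lt_csSup (hK.image (Auchmuty b d lam eta))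
        (sub_lt_self (primalGap K b d lam eta) hδ)
      obtain ⟨om, hom, rfl⟩ := hy
      refine ⟨om, hom, hy2, ?_⟩
      have h1 : Auchmuty a d lam eta om ≤ primalGap K b d lam eta := by
        rw [← hzz]; exact le_csSup (hbdd a ha lam) ⟨om, hom, rfl⟩
      have h2 := hkey lam om
      linarith
    have hlam : lam ∈ K := by
      rw [← hKclosed.closure_eq, Metric.mem_closure_iff]
      intro ε hε
      have hδ : (0:ℝ) < (b - a) * (m / 2 * ε ^ 2) / 2 := by positivity
      obtain ⟨om, hom, _, h2⟩ := happrox _ hδ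
      refine ⟨om, hom, ?_⟩
      rw [dist_comm, dist_eq_norm]
      have hr2 : ‖om - lam‖ ^ 2 < ε ^ 2 := by
        nlinarith [mul_pos hba hm, mul_pos (mul_pos hba hm) (pow_pos hε 2)]
      nlinarith [norm_nonneg (om - lam), hε]
    -- continuity of f_b
    have hcont : Continuous (Auchmuty b d lam eta) := by
      have hdc := hddiff.continuous
      unfold Auchmuty
      exact (continuous_const.sub (continuous_const.mul hdc)).add
        (continuous_const.inner (continuous_const.sub continuous_id))
    -- primal gap at b is 0
    have hB0 : primalGap K b d lam eta = 0 := by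
      apply le_antisymm
      · apply le_of_forall_pos_le_add
        intro ε hε
        obtain ⟨δ, hδpos, hδ⟩ := Metric.continuousAt_iff.1 hcont.continuousAt (ε/2)
          (half_pos hε)
        have hδ'pos : (0:ℝ) < min (ε/2) ((b - a) * (m / 2 * δ ^ 2) / 2) :=
          lt_min (half_pos hε) (by positivity)
        obtain ⟨om, hom, h1, h2⟩ := happrox _ hδ'pos
        have hr2 : ‖om - lam‖ ^ 2 < δ ^ 2 := by
          have h2' : (b - a) * (m / 2 * ‖om - lam‖ ^ 2)
              < (b - a) * (m / 2 * δ ^ 2) / 2 :=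
            lt_of_lt_of_le h2 (min_le_right _ _)
          nlinarith [mul_pos hba hm, mul_pos (mul_pos hba hm) (pow_pos hδpos 2)]
        have hdist : dist om lam < δ := by
          rw [dist_eq_norm]
          nlinarith [norm_nonneg (om - lam), hδpos]
        have h3 := hδ hdist
        rw [auch_self, Real.dist_eq, sub_zero] at h3
        have h4 : Auchmuty b d lam eta om < ε / 2 := (abs_lt.1 h3).2
        have h5 : min (ε/2) ((b - a) * (m / 2 * δ ^ 2) / 2) ≤ ε/2 := min_le_left _ _
        linarith
      · have h := le_csSup (hbdd b hb lam) (⟨lam, hlam, rfl⟩ :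
          Auchmuty b d lam eta lam ∈ Auchmuty b d lam eta '' K)
        rwa [auch_self] at h
    have hA0 : primalGap K a d lam eta = 0 := by rw [hzz, hB0]
    refine ⟨hlam, fun om hom => ?_⟩
    set v := om - lam with hv
    -- points on the segment are in K
    have hseg : ∀ t : ℝ, t ∈ Set.Ioc (0:ℝ) 1 → lam + t • v ∈ K := by
      intro t ht
      have h := hKconvex hlam hom (by linarith [ht.2] : 0 ≤ 1 - t) ht.1.le (by ring)
      have he : lam + t • v = (1 - t) • lam + t • om := by
        rw [hv]; module
      rw [he]; exact h
    have hD : HasDerivAt (fun t : ℝ => d (lam + t • v)) ⟪gradient d lam, v⟫ 0 := by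
      have h1 : HasDerivAt (fun t : ℝ => lam + t • v) v 0 := by
        simpa using ((hasDerivAt_id (0:ℝ)).smul_const v).const_add lam
      have h2 := (hddiff lam).hasGradientAt.hasFDerivAt
      have h2' : HasFDerivAt d
          (InnerProductSpace.toDual ℝ _ (gradient d lam)) (lam + (0:ℝ) • v) := by
        simpa using h2
      have h3 := h2'.comp_hasDerivAt 0 h1
      simpa [InnerProductSpace.toDual_apply_apply, Function.comp_def] using h3
    set D : ℝ := ⟪gradient d lam, v⟫ with hD'
    have hineq : ∀ t : ℝ, t ∈ Set.Ioc (0:ℝ) 1 →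
        ⟪eta, lam - om⟫ ≤ a * ((d (lam + t • v) - d lam - t * D) / t) := by
      intro t ht
      have hfa : Auchmuty a d lam eta (lam + t • v) ≤ 0 := by
        have h : Auchmuty a d lam eta (lam + t • v) ≤ primalGap K a d lam eta :=
          le_csSup (hbdd a ha lam) ⟨_, hseg t ht, rfl⟩
        rwa [hA0] at h
      rw [auch_repr] at hfa
      have e1 : lam - (lam + t • v) = t • (lam - om) := by rw [hv]; module
      have e2 : lam + t • v - lam = t • v := by abel
      rw [e1, e2, real_inner_smul_right, real_inner_smul_right] at hfa
      rw [← mul_div_assoc, le_div_iff₀ ht.1]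
      linarith [hfa]
    have hq : Filter.Tendsto (fun t : ℝ => (d (lam + t • v) - d lam - t * D) / t)
        (nhdsWithin 0 (Set.Ioi 0)) (nhds 0) := by
      have h1 := hasDerivAt_iff_tendsto_slope.1 hD
      have h2 : Filter.Tendsto
          (fun t : ℝ => slope (fun s : ℝ => d (lam + s • v)) 0 t - D)
          (nhdsWithin 0 {(0:ℝ)}ᶜ) (nhds 0) := by
        simpa using h1.sub_const D
      have h3 := h2.mono_left (nhdsWithin_mono 0
        (fun x hx => ne_of_gt (Set.mem_Ioi.1 hx)))
      apply h3.congr'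
      filter_upwards [self_mem_nhdsWithin] with t ht
      have ht' : (t:ℝ) ≠ 0 := ne_of_gt (Set.mem_Ioi.1 ht)
      rw [slope_def_field]
      simp only [sub_zero, zero_smul, add_zero]
      field_simp
    have hIle : ⟪eta, lam - om⟫ ≤ 0 := by
      have htend : Filter.Tendsto
          (fun t : ℝ => a * ((d (lam + t • v) - d lam - t * D) / t))
          (nhdsWithin 0 (Set.Ioi 0)) (nhds 0) := by
        simpa using hq.const_mul a
      refine ge_of_tendsto htend ?_
      filter_upwards [Ioc_mem_nhdsGT_of_mem
        (Set.mem_Ico.2 ⟨le_refl (0:ℝ), zero_lt_one⟩)] with t ht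
      exact hineq t ht
    have he : ⟪om - lam, eta⟫ = -⟪eta, lam - om⟫ := by
      rw [real_inner_comm, ← neg_sub lam om, inner_neg_right]
    linarith [he ▸ neg_nonneg.2 hIle]
  constructor
  · intro lam
    have := hnonneg lam
    unfold Dgap
    linarith
  · intro lam
    constructor
    · exact hforward lam
    · rintro ⟨hlam, hvi⟩
      unfold Dgap
      rw [hsol a ha lam hlam hvi, hsol b hb lam hlam hvi]
      ring
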